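/- Specializing the q-analogue at k = 0 (i.e., a = 1): for d = n+1 and thresholds u = (1,...,1,2,...,2,...) (each value repeated b times, of length db), Σ_{c ∈ PF_{db}(u)} q^{Z(c)} = Σ_{J ∈ spec(d,b)} (db choose j_1,...,j_d) · q^{j_1}, where Z(c) counts entries equal to 1. -/

import Mathlib

open Finset
open scoped Classical

/-- `c` rearranges nondecreasingly so that the `i`-th order statistic is at most `u i`. -/
def SortedLE {n : ℕ} (c u : Fin n → ℕ) : Prop :=
  ∃ σ : Equiv.Perm (Fin n),
    (∀ i j : Fin n, i ≤ j → c (σ i) ≤ c (σ j)) ∧ ∀ i, c (σ i) ≤ u i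

/-- `spec d b`: compositions `(j_1,…,j_d)` of `d·b` into `d` nonnegative parts whose
partial sums satisfy `j_1 + ⋯ + j_t ≥ t·b`. -/
def spec (d b : ℕ) : Finset (Fin d → ℕ) :=
  (Finset.Nat.antidiagonalTuple d (d * b)).filter
    (fun J => ∀ t : Fin d, (t.1 + 1) * b ≤ ∑ i ∈ Finset.univ.filter (· ≤ t), J i)

/-- The set of `u`-parking functions of length `d·b` with thresholds
`u_i = 1 + ⌊i/b⌋` (each value `1,…,d` repeated `b` times). -/
noncomputable def uParkFinset (b d : ℕ) : Finset (Fin (d * b) → ℕ) :=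
  (Fintype.piFinset fun _ : Fin (d * b) => Finset.Icc 1 (1 + (d * b - 1) / b)).filter
    (fun c => SortedLE c (fun i => 1 + i.1 / b))


lemma card_filter_subtype {ι : Type} [Fintype ι] [DecidableEq ι] (T : Finset ι)
    (p : ι → Prop) [DecidablePred p] (h : ∀ i, p i → i ∉ T) :
    (univ.filter fun i : {i : ι // i ∉ T} => p i.1).card = (univ.filter p).card := by
  apply Finset.card_nbij (i := fun i => i.1)
  · intro x hx
    simp only [Finset.mem_coe, Finset.mem_filter, Finset.mem_univ, true_and] at hx ⊢
    exact hx
  · intro x _ y _ hxy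
    exact Subtype.ext hxy
  · intro x hx
    simp only [Finset.coe_filter, Set.mem_setOf_eq, Finset.mem_univ, true_and] at hx
    exact ⟨⟨x, h x hx⟩, by simp [hx], rfl⟩

lemma card_fiber_count (s : Finset ℕ) : ∀ (ι : Type) [Fintype ι] [DecidableEq ι] (J : ℕ → ℕ),
    (∑ a ∈ s, J a) = Fintype.card ι →
    ((Fintype.piFinset fun _ : ι => s).filter
      (fun f => ∀ a ∈ s, (univ.filter fun i => f i = a).card = J a)).card
      = Nat.multinomial s J := by
  induction s using Finset.cons_induction with
  | empty =>
    intro ι _ _ J hsum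
    simp only [Finset.sum_empty] at hsum
    have hE : IsEmpty ι := Fintype.card_eq_zero_iff.mp hsum.symm
    rw [Nat.multinomial_empty, Finset.filter_true_of_mem (by simp)]
    simp [Fintype.card_piFinset]
  | cons a s ha IH =>
    intro ι _ _ J hsum
    rw [Finset.sum_cons] at hsum
    rw [Finset.card_eq_sum_card_fiberwise
      (f := fun f => univ.filter fun i => f i = a) (t := Finset.powersetCard (J a) univ)
      (by
        intro f hf
        rw [Finset.mem_coe, Finset.mem_powersetCard]
        rw [Finset.mem_coe, Finset.mem_filter] at hf
        exact ⟨Finset.subset_univ _, hf.2 a (Finset.mem_cons_self a s)⟩)]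
    have hinner : ∀ T ∈ Finset.powersetCard (J a) univ,
        (((Fintype.piFinset fun _ : ι => s.cons a ha).filter
          (fun f => ∀ x ∈ s.cons a ha, (univ.filter fun i => f i = x).card = J x)).filter
          (fun f => univ.filter (fun i => f i = a) = T)).card = Nat.multinomial s J := by
      intro T hT
      rw [Finset.mem_powersetCard] at hT
      have hcardT : Fintype.card {i : ι // i ∉ T} = Fintype.card ι - J a := by
        rw [← hT.2]
        have := Fintype.card_subtype_compl (p := fun i : ι => i ∈ T)
        simpa [Fintype.card_subtype, Finset.filter_mem_eq_inter] using this
      rw [← IH {i : ι // i ∉ T} J (by rw [hcardT]; omega)]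
      apply Finset.card_nbij' (i := fun f => fun i : {i : ι // i ∉ T} => f i.1)
        (j := fun g => fun i : ι => if h : i ∈ T then a else g ⟨i, h⟩)
      · -- maps to B
        intro f hf
        simp only [Finset.mem_coe, Finset.mem_filter] at hf ⊢
        obtain ⟨⟨hfi, hcnt⟩, hfib⟩ := hf
        constructor
        · rw [Fintype.mem_piFinset]
          intro i
          have h1 : f i.1 ∈ s.cons a ha := Fintype.mem_piFinset.mp hfi i.1
          rcases Finset.mem_cons.mp h1 with h | h
          · exfalso
            have hiT : i.1 ∈ univ.filter (fun j => f j = a) := by simp [h]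
            rw [hfib] at hiT
            exact i.2 hiT
          · exact h
        · intro x hx
          rw [← hcnt x (Finset.mem_cons_of_mem hx)]
          apply card_filter_subtype T (fun i => f i = x)
          intro i hi hiT
          rw [← hfib] at hiT
          simp only [Finset.mem_filter, Finset.mem_univ, true_and] at hiT
          rw [hi] at hiT
          exact ha (hiT ▸ hx)
      · -- maps back to A ∩ fiber
        intro g hg
        simp only [Finset.mem_coe, Finset.mem_filter] at hg ⊢
        obtain ⟨hgi, hcnt⟩ := hg
        have hfib : (univ.filter fun i : ι => (if h : i ∈ T then a else g ⟨i, h⟩) = a) = T := by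
          ext i
          simp only [Finset.mem_filter, Finset.mem_univ, true_and]
          by_cases h : i ∈ T
          · simp [h]
          · simp only [dif_neg h]
            constructor
            · intro he
              exfalso
              have : g ⟨i, h⟩ ∈ s := Fintype.mem_piFinset.mp hgi ⟨i, h⟩
              rw [he] at this; exact ha this
            · intro hiT; exact absurd hiT h
        refine ⟨⟨?_, ?_⟩, hfib⟩
        · rw [Fintype.mem_piFinset]
          intro i
          by_cases h : i ∈ T
          · simp [h, Finset.mem_cons_self]
          · simp only [dif_neg h]
            exact Finset.mem_cons_of_mem (Fintype.mem_piFinset.mp hgi ⟨i, h⟩)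
        · intro x hx
          rcases Finset.mem_cons.mp hx with rfl | hx
          · rw [hfib]; exact hT.2
          · rw [← hcnt x hx]
            have key := (card_filter_subtype T
              (fun i => (if h : i ∈ T then a else g ⟨i, h⟩) = x)
              (by
                intro i hi hiT
                rw [dif_pos hiT] at hi
                exact ha (hi ▸ hx))).symm
            refine key.trans ?_
            exact congrArg Finset.card (Finset.filter_congr (fun i _ => by rw [dif_neg i.2]))
      · -- left inverse
        intro f hf
        simp only [Finset.mem_coe, Finset.mem_filter] at hf
        funext i
        beta_reduce
        by_cases h : i ∈ T
        · rw [dif_pos h]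
          rw [← hf.2] at h
          simp only [Finset.mem_filter, Finset.mem_univ, true_and] at h
          exact h.symm
        · rw [dif_neg h]
      · -- right inverse
        intro g _
        funext i
        simp [dif_neg i.2]
    rw [Finset.sum_congr rfl hinner, Finset.sum_const, Finset.card_powersetCard,
      Finset.card_univ, smul_eq_mul, Nat.multinomial_cons, hsum]

lemma card_filter_perm {n : ℕ} (σ : Equiv.Perm (Fin n)) (p : Fin n → Prop) [DecidablePred p] :
    (univ.filter fun i => p (σ i)).card = (univ.filter p).card := by
  rw [← Fintype.card_subtype, ← Fintype.card_subtype]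
  exact Fintype.card_congr (σ.subtypeEquiv fun i => Iff.rfl)

lemma card_filter_lt {n m : ℕ} (h : m ≤ n) :
    (univ.filter fun j : Fin n => j.1 < m).card = m := by
  rw [← Finset.card_range m]
  apply Finset.card_nbij (i := fun j => j.1)
  · intro x hx
    simp only [Finset.mem_coe, Finset.mem_filter, Finset.mem_univ, true_and] at hx
    simpa using hx
  · intro x _ y _ hxy
    exact Fin.ext hxy
  · intro x hx
    simp only [Finset.coe_range, Set.mem_Iio] at hx
    exact ⟨⟨x, lt_of_lt_of_le hx h⟩, by simp [hx], rfl⟩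

lemma lt_count_iff {n : ℕ} {f : Fin n → ℕ} (hf : Monotone f) (a : ℕ) (j : Fin n) :
    (j : ℕ) < (univ.filter fun i => f i ≤ a).card ↔ f j ≤ a := by
  have := Tuple.lt_card_le_iff_apply_le_of_monotone (a := a) (j := j) hf
  exact this

lemma div_Icc_eq {b d : ℕ} (hb : 0 < b) (hd : 0 < d) : 1 + (d * b - 1) / b = d := by
  have h1 : (d - 1) * b = d * b - b := by rw [Nat.sub_mul, one_mul]
  have hbd : b ≤ d * b := Nat.le_mul_of_pos_left b hd
  have h2 : d * b - 1 = (b - 1) + (d - 1) * b := by omega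
  rw [h2, Nat.add_mul_div_right _ _ hb, Nat.div_eq_of_lt (by omega)]
  omega

lemma mem_uPark_iff {b d : ℕ} (hb : 0 < b) (hd : 0 < d) (c : Fin (d * b) → ℕ) :
    c ∈ uParkFinset b d ↔ (∀ i, c i ∈ Finset.Icc 1 d) ∧
      ∀ t : Fin d, (t.1 + 1) * b ≤ (univ.filter fun i => c i ≤ t.1 + 1).card := by
  rw [uParkFinset, Finset.mem_filter, Fintype.mem_piFinset, div_Icc_eq hb hd]
  constructor
  · rintro ⟨hpi, σ, hmono, hle⟩
    refine ⟨hpi, ?_⟩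
    intro t
    have hle' : (t.1 + 1) * b ≤ d * b := Nat.mul_le_mul_right b (by omega)
    calc (t.1 + 1) * b
        = (univ.filter fun j : Fin (d * b) => j.1 < (t.1 + 1) * b).card :=
          (card_filter_lt hle').symm
      _ ≤ (univ.filter fun j => c (σ j) ≤ t.1 + 1).card := by
          apply Finset.card_le_card
          apply Finset.monotone_filter_right
          intro j _ hj
          have hdiv : j.1 / b < t.1 + 1 := (Nat.div_lt_iff_lt_mul hb).mpr hj
          have h4 : c (σ j) ≤ 1 + j.1 / b := hle j
          omega
      _ = (univ.filter fun i => c i ≤ t.1 + 1).card := card_filter_perm σ (fun i => c i ≤ t.1 + 1)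
  · rintro ⟨hc, hcnt⟩
    refine ⟨hc, Tuple.sort c, fun i j hij => Tuple.monotone_sort c hij, ?_⟩
    intro i
    set t := i.1 / b with ht
    have htd : t < d := (Nat.div_lt_iff_lt_mul hb).mpr i.2
    have hib : i.1 < (t + 1) * b := Nat.lt_mul_of_div_lt (by omega) hb
    have hkey : (i : ℕ) < (univ.filter fun j => c (Tuple.sort c j) ≤ t + 1).card := by
      have h1 := card_filter_perm (Tuple.sort c) (fun j => c j ≤ t + 1)
      have h2 := hcnt ⟨t, htd⟩
      simp only at h1 h2
      omega
    have h3 := (lt_count_iff (f := c ∘ Tuple.sort c) (Tuple.monotone_sort c) (t + 1) i).mp hkey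
    simp only [Function.comp] at h3
    show c (Tuple.sort c i) ≤ 1 + i.1 / b
    omega

lemma count_le_decomp {b d : ℕ} (c : Fin (d * b) → ℕ) (hc : ∀ i, c i ∈ Finset.Icc 1 d)
    (t : Fin d) :
    (univ.filter fun i => c i ≤ t.1 + 1).card
      = ∑ x ∈ univ.filter (· ≤ t), (univ.filter fun i => c i = x.1 + 1).card := by
  have hlt : ∀ i : Fin (d * b), c i - 1 < d := by
    intro i; have := hc i; rw [Finset.mem_Icc] at this; omega
  rw [Finset.card_eq_sum_card_fiberwise (f := fun i => (⟨c i - 1, hlt i⟩ : Fin d))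
    (t := univ.filter (· ≤ t))
    (by
      intro i hi
      rw [Finset.mem_coe, Finset.mem_filter] at hi ⊢
      refine ⟨Finset.mem_univ _, ?_⟩
      have := hc i; rw [Finset.mem_Icc] at this
      show (⟨c i - 1, hlt i⟩ : Fin d).1 ≤ t.1
      simp only
      omega)]
  apply Finset.sum_congr rfl
  intro x hx
  rw [Finset.mem_filter] at hx
  have hxt : x.1 ≤ t.1 := hx.2
  congr 1
  ext i
  simp only [Finset.mem_filter, Finset.mem_univ, true_and]
  have hci := hc i; rw [Finset.mem_Icc] at hci
  constructor
  · rintro ⟨h1, h2⟩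
    have h3 : c i - 1 = x.1 := congrArg Fin.val h2
    omega
  · intro h
    refine ⟨by omega, ?_⟩
    apply Fin.ext
    show c i - 1 = x.1
    omega

lemma count_total {b d : ℕ} (c : Fin (d * b) → ℕ) (hc : ∀ i, c i ∈ Finset.Icc 1 d) :
    ∑ x : Fin d, (univ.filter fun i => c i = x.1 + 1).card = d * b := by
  have hlt : ∀ i : Fin (d * b), c i - 1 < d := by
    intro i; have := hc i; rw [Finset.mem_Icc] at this; omega
  have h := Finset.card_eq_sum_card_fiberwise (f := fun i => (⟨c i - 1, hlt i⟩ : Fin d))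
    (s := (univ : Finset (Fin (d * b)))) (t := univ) (by simp)
  rw [Finset.card_univ, Fintype.card_fin] at h
  refine Eq.trans ?_ h.symm
  apply Finset.sum_congr rfl
  intro x _
  congr 1
  ext i
  simp only [Finset.mem_filter, Finset.mem_univ, true_and]
  have hci := hc i; rw [Finset.mem_Icc] at hci
  constructor
  · intro h2
    apply Fin.ext
    show c i - 1 = x.1
    omega
  · intro h2
    have h3 : c i - 1 = x.1 := congrArg Fin.val h2
    omega


def Jext (d : ℕ) (J : Fin d → ℕ) : ℕ → ℕ := fun x => if h : x - 1 < d then J ⟨x - 1, h⟩ else 0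

lemma reindex_sum {d : ℕ} (hd : 0 < d) (J : Fin d → ℕ) (g : ℕ → ℕ) :
    ∑ x ∈ Finset.Icc 1 d, g (Jext d J x) = ∑ y : Fin d, g (J y) := by
  apply Finset.sum_nbij' (i := fun x => (⟨min (x - 1) (d - 1), by omega⟩ : Fin d))
    (j := fun y => y.1 + 1)
  · intro x _; exact Finset.mem_univ _
  · intro y _
    rw [Finset.mem_Icc]
    have := y.2
    omega
  · intro x hx
    rw [Finset.mem_Icc] at hx
    simp only
    omega
  · intro y _
    apply Fin.ext
    have := y.2
    simp only
    omega
  · intro x hx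
    rw [Finset.mem_Icc] at hx
    have hxd : x - 1 < d := by omega
    show g (if h : x - 1 < d then J ⟨x - 1, h⟩ else 0) = _
    rw [dif_pos hxd]
    have hfin : (⟨x - 1, hxd⟩ : Fin d) = ⟨min (x - 1) (d - 1), by omega⟩ := by
      apply Fin.ext
      show x - 1 = min (x - 1) (d - 1)
      omega
    exact congrArg (fun z => g (J z)) hfin

lemma reindex_prod {d : ℕ} (hd : 0 < d) (J : Fin d → ℕ) (g : ℕ → ℕ) :
    ∏ x ∈ Finset.Icc 1 d, g (Jext d J x) = ∏ y : Fin d, g (J y) := by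
  apply Finset.prod_nbij' (i := fun x => (⟨min (x - 1) (d - 1), by omega⟩ : Fin d))
    (j := fun y => y.1 + 1)
  · intro x _; exact Finset.mem_univ _
  · intro y _
    rw [Finset.mem_Icc]
    have := y.2
    omega
  · intro x hx
    rw [Finset.mem_Icc] at hx
    simp only
    omega
  · intro y _
    apply Fin.ext
    have := y.2
    simp only
    omega
  · intro x hx
    rw [Finset.mem_Icc] at hx
    have hxd : x - 1 < d := by omega
    show g (if h : x - 1 < d then J ⟨x - 1, h⟩ else 0) = _
    rw [dif_pos hxd]
    have hfin : (⟨x - 1, hxd⟩ : Fin d) = ⟨min (x - 1) (d - 1), by omega⟩ := by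
      apply Fin.ext
      show x - 1 = min (x - 1) (d - 1)
      omega
    exact congrArg (fun z => g (J z)) hfin

lemma multinomial_reindex {d : ℕ} (hd : 0 < d) (J : Fin d → ℕ) :
    Nat.multinomial (Finset.Icc 1 d) (Jext d J) = Nat.multinomial Finset.univ J := by
  have h1 := reindex_sum hd J id
  have h2 := reindex_prod hd J Nat.factorial
  simp only [id_eq] at h1
  unfold Nat.multinomial
  rw [h1, h2]

theorem q_analogue_a_eq_one (b d : ℕ) (hb : 0 < b) (hd : 0 < d) (q : ℝ) :
    ∑ c ∈ uParkFinset b d, q ^ (Finset.univ.filter (fun i => c i = 1)).card =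
      ∑ J ∈ spec d b, (Nat.multinomial Finset.univ J : ℝ) * q ^ (J ⟨0, hd⟩) := by
  have hmaps : ∀ c ∈ uParkFinset b d,
      (fun x : Fin d => (univ.filter fun i => c i = x.1 + 1).card) ∈ spec d b := by
    intro c hc
    rw [mem_uPark_iff hb hd] at hc
    rw [spec, Finset.mem_filter, Finset.Nat.mem_antidiagonalTuple]
    refine ⟨count_total c hc.1, ?_⟩
    intro t
    rw [← count_le_decomp c hc.1 t]
    exact hc.2 t
  rw [← Finset.sum_fiberwise_of_maps_to hmaps]
  apply Finset.sum_congr rfl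
  intro J hJ
  have hJspec := hJ
  rw [spec, Finset.mem_filter, Finset.Nat.mem_antidiagonalTuple] at hJspec
  have hconst : ∀ c ∈ (uParkFinset b d).filter
      (fun c => (fun x : Fin d => (univ.filter fun i => c i = x.1 + 1).card) = J),
      q ^ (univ.filter (fun i => c i = 1)).card = q ^ (J ⟨0, hd⟩) := by
    intro c hcmem
    rw [Finset.mem_filter] at hcmem
    have hz : (univ.filter fun i => c i = 1).card = J ⟨0, hd⟩ := by
      rw [← hcmem.2]
    rw [hz]
  rw [Finset.sum_congr rfl hconst, Finset.sum_const, nsmul_eq_mul]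
  congr 1
  have hsum' : ∑ x ∈ Finset.Icc 1 d, Jext d J x = Fintype.card (Fin (d * b)) := by
    have h1 := reindex_sum hd J id
    simp only [id_eq] at h1
    rw [Fintype.card_fin]
    exact h1.trans hJspec.1
  have hcard : ((uParkFinset b d).filter
      (fun c => (fun x : Fin d => (univ.filter fun i => c i = x.1 + 1).card) = J)).card
      = Nat.multinomial Finset.univ J := by
    refine Eq.trans ?_
      ((card_fiber_count (Finset.Icc 1 d) (Fin (d * b)) (Jext d J) hsum').trans
        (multinomial_reindex hd J))
    apply Finset.card_nbij' (i := id) (j := id)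
    · -- forward
      intro c hc
      simp only [id_eq]
      rw [Finset.mem_coe, Finset.mem_filter] at hc ⊢
      obtain ⟨hc1, hc2⟩ := hc
      rw [mem_uPark_iff hb hd] at hc1
      refine ⟨Fintype.mem_piFinset.mpr hc1.1, ?_⟩
      intro x hx
      rw [Finset.mem_Icc] at hx
      have a4 : x - 1 < d := by clear hsum'; omega
      have hxd : x - 1 < d := by omega
      show (univ.filter fun i => c i = x).card = Jext d J x
      have hstep : Jext d J x = J ⟨x - 1, hxd⟩ := by
        show (if h : x - 1 < d then J ⟨x - 1, h⟩ else 0) = _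
        rw [dif_pos hxd]
      rw [hstep]
      have hx1 : x - 1 + 1 = x := by omega
      have h6 : (univ.filter fun i => c i = x - 1 + 1).card = J ⟨x - 1, hxd⟩ :=
        congrFun hc2 ⟨x - 1, hxd⟩
      rw [← h6, hx1]
    · -- backward
      intro c hc
      simp only [id_eq]
      rw [Finset.mem_coe, Finset.mem_filter] at hc ⊢
      obtain ⟨hpi, hcnt⟩ := hc
      have hpi' : ∀ i, c i ∈ Finset.Icc 1 d := Fintype.mem_piFinset.mp hpi
      have hFcJ : (fun x : Fin d => (univ.filter fun i => c i = x.1 + 1).card) = J := by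
        funext y
        have hy : y.1 + 1 ∈ Finset.Icc 1 d := by
          rw [Finset.mem_Icc]
          have := y.2
          omega
        have h1 := hcnt (y.1 + 1) hy
        have h2 : Jext d J (y.1 + 1) = J y := by
          show (if h : y.1 + 1 - 1 < d then J ⟨y.1 + 1 - 1, h⟩ else 0) = J y
          rw [dif_pos (by have := y.2; omega : y.1 + 1 - 1 < d)]
          exact congrArg J (Fin.ext rfl)
        show (univ.filter fun i => c i = y.1 + 1).card = J y
        exact h1.trans h2
      refine ⟨?_, hFcJ⟩
      rw [mem_uPark_iff hb hd]
      refine ⟨hpi', ?_⟩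
      intro t
      rw [count_le_decomp c hpi' t]
      calc (t.1 + 1) * b ≤ ∑ i ∈ univ.filter (· ≤ t), J i := hJspec.2 t
        _ = ∑ x ∈ univ.filter (· ≤ t), (univ.filter fun i => c i = x.1 + 1).card := by
            apply Finset.sum_congr rfl
            intro x _
            rw [← hFcJ]
    · intro c _; rfl
    · intro c _; rfl
  exact_mod_cast congrArg (Nat.cast (R := ℝ)) hcard
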